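/- Let D ≥ 4, k real with k > D/2, and p ≥ k. Suppose V : ℂ → ℝ satisfies |V(z)| ≤ K₀|z|^{p+1} for all z ∈ ℂ, with K₀ > 0. Suppose g : (0,∞) → (0,1] and h̃ : (0,∞) → ℂ satisfies |h̃(s)| ≤ (2x/(2k−D)) (1+u)^{-(2k-D)/2}(1+s+u)^{-(D-2)/2} for all s > 0, for fixed u ≥ 0, x ≥ 0. Then there exists C > 0 depending only on D, k, p, K₀ such that for all r > 0: (1/r^{D−3}) ∫₀^r g(s)|V(h̃(s))| s^{D−2} ds ≤ C x^{p+1} / ((1+u)^{(2k−D)(p+1)/2} (1+r+u)^{D−3}). -/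

import Mathlib

open MeasureTheory intervalIntegral

lemma aux_shift (c b r : ℝ) (hc : 1 ≤ c) (hb : 1 < b) (hr : 0 ≤ r) :
    ∫ s in (0:ℝ)..r, (c + s) ^ (-b) ≤ 1 / (b - 1) := by
  have hc0 : 0 < c := lt_of_lt_of_le one_pos hc
  have h1 : (∫ s in (0:ℝ)..r, (c + s) ^ (-b)) = ∫ t in c..(c + r), t ^ (-b) := by
    simpa using integral_comp_add_left (fun t => t ^ (-b)) c (a := 0) (b := r)
  have h0 : (0:ℝ) ∉ Set.uIcc c (c + r) := by
    rw [Set.mem_uIcc]; push_neg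
    constructor <;> intro h <;> linarith
  have h2 : (∫ t in c..(c + r), t ^ (-b)) = ((c + r) ^ (-b + 1) - c ^ (-b + 1)) / (-b + 1) := by
    rw [integral_rpow (Or.inr ⟨by intro h; linarith [neg_eq_iff_eq_neg.mp h], h0⟩)]
  have hcpow : c ^ (-b + 1) ≤ 1 := by
    have := Real.rpow_le_rpow_of_nonpos one_pos hc (by linarith : -b + 1 ≤ 0)
    simpa using this
  have hcr : (0:ℝ) ≤ (c + r) ^ (-b + 1) := Real.rpow_nonneg (by linarith) _
  have h3 : ((c + r) ^ (-b + 1) - c ^ (-b + 1)) / (-b + 1)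
      = (c ^ (-b + 1) - (c + r) ^ (-b + 1)) / (b - 1) := by
    rw [show (-b + 1) = -(b-1) by ring, div_neg]; ring
  rw [h1, h2, h3]
  gcongr
  · linarith

lemma aux_shift_integrable (c b r : ℝ) (hc : 1 ≤ c) (hr : 0 ≤ r) :
    IntervalIntegrable (fun s => (c + s) ^ (-b)) volume 0 r := by
  apply ContinuousOn.intervalIntegrable
  apply ContinuousOn.rpow_const
  · fun_prop
  · intro s hs
    rw [Set.uIcc_of_le hr] at hs
    left; nlinarith [hs.1]

lemma inv_le_inv_aux (a b c : ℝ) (ha : 0 < a) (hb : 0 < b) (h : b ≤ c * a) : a⁻¹ ≤ c * b⁻¹ := by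
  rw [← div_eq_mul_inv, le_div_iff₀ hb, inv_mul_eq_div, div_le_iff₀ ha]
  exact h

set_option maxHeartbeats 1000000 in
theorem stmt_17 (D : ℕ) (hD : 4 ≤ D) (k p K₀ u x : ℝ) (hk : k > D / 2) (hp : k ≤ p)
    (hK₀ : 0 < K₀) (hu : 0 ≤ u) (hx : 0 ≤ x)
    (V : ℂ → ℝ) (hV : ∀ z : ℂ, |V z| ≤ K₀ * ‖z‖ ^ (p + 1))
    (g : ℝ → ℝ) (hg : ∀ s : ℝ, 0 < s → 0 < g s ∧ g s ≤ 1)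
    (ht : ℝ → ℂ)
    (hht : ∀ s : ℝ, 0 < s →
      ‖ht s‖ ≤ 2 * x / (2 * k - D) *
        ((1 + u) ^ (-((2 * k - D) / 2)) * (1 + s + u) ^ (-(((D : ℝ) - 2) / 2)))) :
    ∃ C : ℝ, 0 < C ∧ ∀ r : ℝ, 0 < r →
      (1 / r ^ ((D : ℝ) - 3)) * ∫ s in (0:ℝ)..r, g s * |V (ht s)| * s ^ ((D : ℝ) - 2)
        ≤ C * x ^ (p + 1) /
            ((1 + u) ^ ((2 * k - D) * (p + 1) / 2) * (1 + r + u) ^ ((D : ℝ) - 3)) := by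
  have hD4 : (4:ℝ) ≤ (D:ℝ) := by exact_mod_cast hD
  have h2k : 0 < 2 * k - (D:ℝ) := by
    have : (D:ℝ)/2 < k := hk
    linarith
  have hpD : (D:ℝ)/2 < p := lt_of_lt_of_le hk hp
  have hq0 : (0:ℝ) < p + 1 := by linarith
  have h1u0 : (0:ℝ) < 1 + u := by linarith
  have h1u : (1:ℝ) ≤ 1 + u := by linarith
  set q : ℝ := p + 1 with hqdef
  set α : ℝ := (2*k - (D:ℝ)) * q / 2 with hαdef
  set β : ℝ := ((D:ℝ) - 2) * q / 2 with hβdef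
  set b : ℝ := β - ((D:ℝ) - 2) with hbdef
  have hβD : (D:ℝ) - 1 < β := by
    rw [hβdef, hqdef]
    nlinarith [sq_nonneg ((D:ℝ) - 4), mul_pos h2k hq0]
  have hb1 : 1 < b := by rw [hbdef]; linarith
  set c₀ : ℝ := 2 / (2*k - (D:ℝ)) with hc₀def
  have hc₀0 : 0 < c₀ := div_pos two_pos h2k
  set C₁ : ℝ := K₀ * c₀ ^ q with hC₁def
  have hC₁0 : 0 < C₁ := mul_pos hK₀ (Real.rpow_pos_of_pos hc₀0 q)
  set e3 : ℝ := (D:ℝ) - 3 with he3def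
  have hD1 : (0:ℝ) < (D:ℝ) - 1 := by linarith
  have hb1' : (0:ℝ) < b - 1 := by linarith
  have h2e3 : (0:ℝ) < (2:ℝ) ^ e3 := Real.rpow_pos_of_pos two_pos _
  set C : ℝ := C₁ * 2 ^ e3 * (1/((D:ℝ)-1) + 1/(b-1)) with hCdef
  have hCpos : 0 < C := by
    apply mul_pos (mul_pos hC₁0 h2e3)
    have h1 : (0:ℝ) < 1/((D:ℝ)-1) := div_pos one_pos hD1
    have h2 : (0:ℝ) < 1/(b-1) := div_pos one_pos hb1'
    linarith
  refine ⟨C, hCpos, ?_⟩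
  intro r hr
  have hPα : (0:ℝ) < (1+u) ^ α := Real.rpow_pos_of_pos h1u0 _
  have h1ru : (0:ℝ) < 1 + r + u := by linarith
  have hPR : (0:ℝ) < (1+r+u) ^ e3 := Real.rpow_pos_of_pos h1ru _
  have hxq : (0:ℝ) ≤ x ^ q := Real.rpow_nonneg hx _
  have hnegα0 : (0:ℝ) ≤ (1+u) ^ (-α) := Real.rpow_nonneg h1u0.le _
  have hnegβ0 : (0:ℝ) ≤ (1+u) ^ (-β) := Real.rpow_nonneg h1u0.le _
  have hαinv : (0:ℝ) ≤ ((1+u)^α)⁻¹ := inv_nonneg.mpr hPα.le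
  have hRinv : (0:ℝ) ≤ ((1+r+u)^e3)⁻¹ := inv_nonneg.mpr hPR.le
  have hrpos : (0:ℝ) < r ^ e3 := Real.rpow_pos_of_pos hr _
  have hrinv : (0:ℝ) ≤ 1 / r ^ e3 := by
    rw [one_div]; exact inv_nonneg.mpr hrpos.le
  -- pointwise bound
  have hbound : ∀ s ∈ Set.Icc (0:ℝ) r, g s * |V (ht s)| * s ^ ((D:ℝ)-2)
      ≤ C₁ * x^q * (1+u)^(-α) * ((1+s+u)^(-β) * s^((D:ℝ)-2)) := by
    intro s hs
    have hsu0 : (0:ℝ) < 1 + s + u := by linarith [hs.1]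
    rcases eq_or_lt_of_le hs.1 with h0 | h0
    · rw [← h0, Real.zero_rpow (by intro hz; linarith : ((D:ℝ)-2) ≠ 0)]
      simp
    · have hgs := hg s h0
      have hV1 : |V (ht s)| ≤ K₀ * ‖ht s‖ ^ q := by
        exact hV (ht s)
      have hA0 : (0:ℝ) ≤ 2 * x / (2*k - (D:ℝ)) := div_nonneg (by linarith) h2k.le
      have hB0 : (0:ℝ) ≤ (1+u) ^ (-((2*k-(D:ℝ))/2)) := Real.rpow_nonneg h1u0.le _
      have hC0 : (0:ℝ) ≤ (1+s+u) ^ (-(((D:ℝ)-2)/2)) := Real.rpow_nonneg hsu0.le _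
      have h2 : ‖ht s‖ ^ q ≤ (2 * x / (2*k-(D:ℝ)) *
          ((1+u) ^ (-((2*k-(D:ℝ))/2)) * (1+s+u) ^ (-(((D:ℝ)-2)/2)))) ^ q :=
        Real.rpow_le_rpow (norm_nonneg _) (hht s h0) hq0.le
      have hexp : (2 * x / (2*k-(D:ℝ)) *
          ((1+u) ^ (-((2*k-(D:ℝ))/2)) * (1+s+u) ^ (-(((D:ℝ)-2)/2)))) ^ q
          = c₀ ^ q * x ^ q * ((1+u) ^ (-α) * (1+s+u) ^ (-β)) := by
        rw [Real.mul_rpow hA0 (mul_nonneg hB0 hC0), Real.mul_rpow hB0 hC0,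
          ← Real.rpow_mul h1u0.le, ← Real.rpow_mul hsu0.le,
          show 2 * x / (2*k-(D:ℝ)) = c₀ * x by rw [hc₀def]; ring,
          Real.mul_rpow hc₀0.le hx,
          show -((2*k-(D:ℝ))/2) * q = -α by rw [hαdef]; ring,
          show -(((D:ℝ)-2)/2) * q = -β by rw [hβdef]; ring]
      have hse : (0:ℝ) ≤ s ^ ((D:ℝ)-2) := Real.rpow_nonneg h0.le _
      calc g s * |V (ht s)| * s ^ ((D:ℝ)-2)
          ≤ 1 * (K₀ * ‖ht s‖ ^ q) * s ^ ((D:ℝ)-2) := by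
            apply mul_le_mul_of_nonneg_right _ hse
            exact mul_le_mul hgs.2 hV1 (abs_nonneg _) zero_le_one
        _ ≤ 1 * (K₀ * (c₀^q * x^q * ((1+u)^(-α) * (1+s+u)^(-β)))) * s ^ ((D:ℝ)-2) := by
            apply mul_le_mul_of_nonneg_right _ hse
            rw [one_mul, one_mul]
            apply mul_le_mul_of_nonneg_left _ hK₀.le
            rw [← hexp]; exact h2
        _ = C₁ * x^q * (1+u)^(-α) * ((1+s+u)^(-β) * s^((D:ℝ)-2)) := by
            rw [hC₁def]; ring
  by_cases hInt : IntervalIntegrable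
      (fun s => g s * |V (ht s)| * s ^ ((D:ℝ)-2)) volume 0 r
  swap
  · rw [intervalIntegral.integral_undef hInt, mul_zero]
    exact div_nonneg (mul_nonneg hCpos.le hxq) (mul_nonneg hPα.le hPR.le)
  -- rewriting RHS
  have hRHS : C * x ^ q / ((1+u)^α * (1+r+u)^e3)
      = C * (x^q * ((1+u)^α)⁻¹ * ((1+r+u)^e3)⁻¹) := by
    rw [div_eq_mul_inv, mul_inv]; ring
  rw [hRHS]
  have hfin : ∀ c' : ℝ, c' ≤ C →
      (1 / r ^ e3) * (∫ s in (0:ℝ)..r, g s * |V (ht s)| * s ^ ((D:ℝ)-2))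
        ≤ c' * (x^q * ((1+u)^α)⁻¹ * ((1+r+u)^e3)⁻¹) →
      (1 / r ^ e3) * (∫ s in (0:ℝ)..r, g s * |V (ht s)| * s ^ ((D:ℝ)-2))
        ≤ C * (x^q * ((1+u)^α)⁻¹ * ((1+r+u)^e3)⁻¹) := by
    intro c' hc' hle
    exact hle.trans (mul_le_mul_of_nonneg_right hc'
      (mul_nonneg (mul_nonneg hxq hαinv) hRinv))
  have hnegα : ((1+u):ℝ)^(-α) = ((1+u)^α)⁻¹ := Real.rpow_neg h1u0.le _
  have hCsum : ∀ d d' : ℝ, 0 ≤ d → 0 ≤ d' → C₁ * 2^e3 * d ≤ C₁ * 2^e3 * (d + d') := by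
    intro d d' hd hd'
    have hnn : (0:ℝ) ≤ C₁ * 2^e3 := mul_nonneg hC₁0.le h2e3.le
    nlinarith
  rcases le_or_gt r (1+u) with hcase | hcase
  · -- Case A : r ≤ 1+u
    apply hfin (C₁ * 2^e3 * (1/((D:ℝ)-1)))
    · rw [hCdef]
      exact hCsum _ _ (div_nonneg zero_le_one hD1.le) (div_nonneg zero_le_one hb1'.le)
    set M₁ : ℝ := C₁ * x^q * (1+u)^(-α) * (1+u)^(-β) with hM₁def
    have hM₁0 : 0 ≤ M₁ := by
      rw [hM₁def]
      exact mul_nonneg (mul_nonneg (mul_nonneg hC₁0.le hxq) hnegα0) hnegβ0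
    have hbound2 : ∀ s ∈ Set.Icc (0:ℝ) r, g s * |V (ht s)| * s ^ ((D:ℝ)-2)
        ≤ M₁ * s ^ ((D:ℝ)-2) := by
      intro s hs
      refine (hbound s hs).trans ?_
      have hnn : (0:ℝ) ≤ C₁ * x^q * (1+u)^(-α) :=
        mul_nonneg (mul_nonneg hC₁0.le hxq) hnegα0
      have h1 : ((1+s+u):ℝ)^(-β) ≤ (1+u)^(-β) :=
        Real.rpow_le_rpow_of_nonpos h1u0 (by linarith [hs.1]) (by linarith : -β ≤ 0)
      calc C₁ * x^q * (1+u)^(-α) * ((1+s+u)^(-β) * s^((D:ℝ)-2))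
          ≤ C₁ * x^q * (1+u)^(-α) * ((1+u)^(-β) * s^((D:ℝ)-2)) := by
            apply mul_le_mul_of_nonneg_left _ hnn
            exact mul_le_mul_of_nonneg_right h1 (Real.rpow_nonneg hs.1 _)
        _ = M₁ * s ^ ((D:ℝ)-2) := by rw [hM₁def]; ring
    have hIb : IntervalIntegrable (fun s => M₁ * s ^ ((D:ℝ)-2)) volume 0 r :=
      (intervalIntegral.intervalIntegrable_rpow (Or.inl (by linarith))).const_mul M₁
    have hmono := intervalIntegral.integral_mono_on hr.le hInt hIb hbound2
    have hval : (∫ s in (0:ℝ)..r, M₁ * s ^ ((D:ℝ)-2))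
        = M₁ * (r ^ ((D:ℝ)-1) / ((D:ℝ)-1)) := by
      rw [intervalIntegral.integral_const_mul,
        integral_rpow (Or.inl (by linarith : (-1:ℝ) < (D:ℝ)-2)),
        Real.zero_rpow (by intro hz; linarith : ((D:ℝ)-2+1) ≠ 0),
        show ((D:ℝ)-2+1) = (D:ℝ)-1 by ring, sub_zero]
    have hrsplit : r ^ ((D:ℝ)-1) = r ^ e3 * r ^ (2:ℝ) := by
      rw [← Real.rpow_add hr, he3def]
      congr 1
      ring
    have step1 : (1 / r ^ e3) * (∫ s in (0:ℝ)..r, g s * |V (ht s)| * s ^ ((D:ℝ)-2))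
        ≤ (1 / r ^ e3) * (M₁ * (r ^ ((D:ℝ)-1) / ((D:ℝ)-1))) :=
      mul_le_mul_of_nonneg_left (hmono.trans_eq hval) hrinv
    refine step1.trans ?_
    have step2 : (1 / r ^ e3) * (M₁ * (r ^ ((D:ℝ)-1) / ((D:ℝ)-1)))
        = (M₁ / ((D:ℝ)-1)) * r ^ (2:ℝ) := by
      rw [hrsplit]
      field_simp [hrpos.ne', hD1.ne']
    rw [step2]
    have step3 : (M₁ / ((D:ℝ)-1)) * r ^ (2:ℝ) ≤ (M₁ / ((D:ℝ)-1)) * (1+u) ^ (2:ℝ) :=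
      mul_le_mul_of_nonneg_left
        (Real.rpow_le_rpow hr.le hcase (by norm_num))
        (div_nonneg hM₁0 hD1.le)
    refine step3.trans ?_
    have hmerge : ((1+u):ℝ)^(-β) * (1+u)^(2:ℝ) = (1+u)^(2-β) := by
      rw [← Real.rpow_add h1u0]; congr 1; ring
    have hstep4 : ((1+u):ℝ)^(2-β) ≤ (1+u)^(-e3) :=
      Real.rpow_le_rpow_of_exponent_le h1u (by rw [he3def]; linarith)
    have h5 : ((1+r+u):ℝ)^e3 ≤ 2^e3 * (1+u)^e3 := by
      rw [← Real.mul_rpow (by norm_num) h1u0.le]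
      exact Real.rpow_le_rpow h1ru.le (by linarith) (by rw [he3def]; linarith)
    have hkey2 : (((1+u):ℝ)^e3)⁻¹ ≤ 2^e3 * (((1+r+u):ℝ)^e3)⁻¹ :=
      inv_le_inv_aux _ _ _ (Real.rpow_pos_of_pos h1u0 _) hPR h5
    have hstep5 : ((1+u):ℝ)^(-e3) ≤ 2^e3 * (((1+r+u):ℝ)^e3)⁻¹ := by
      rw [Real.rpow_neg h1u0.le]; exact hkey2
    calc (M₁ / ((D:ℝ)-1)) * (1+u) ^ (2:ℝ)
        = (C₁ * (1/((D:ℝ)-1))) * (x^q * ((1+u)^α)⁻¹) * ((1+u)^(-β) * (1+u)^(2:ℝ)) := by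
          rw [hM₁def, hnegα]; ring
      _ ≤ (C₁ * (1/((D:ℝ)-1))) * (x^q * ((1+u)^α)⁻¹) * (2^e3 * (((1+r+u):ℝ)^e3)⁻¹) := by
          apply mul_le_mul_of_nonneg_left (hmerge.le.trans (hstep4.trans hstep5))
          exact mul_nonneg (mul_nonneg hC₁0.le (div_nonneg zero_le_one hD1.le))
            (mul_nonneg hxq hαinv)
      _ = (C₁ * 2^e3 * (1/((D:ℝ)-1))) * (x^q * ((1+u)^α)⁻¹ * ((1+r+u)^e3)⁻¹) := by
          ring
  · -- Case B : 1+u < r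
    apply hfin (C₁ * 2^e3 * (1/(b-1)))
    · rw [hCdef]
      have := hCsum (1/(b-1)) (1/((D:ℝ)-1)) (div_nonneg zero_le_one hb1'.le)
        (div_nonneg zero_le_one hD1.le)
      calc C₁ * 2^e3 * (1/(b-1)) ≤ C₁ * 2^e3 * (1/(b-1) + 1/((D:ℝ)-1)) := this
        _ = C₁ * 2^e3 * (1/((D:ℝ)-1) + 1/(b-1)) := by ring
    set N : ℝ := C₁ * x^q * (1+u)^(-α) with hNdef
    have hN0 : 0 ≤ N := by
      rw [hNdef]
      exact mul_nonneg (mul_nonneg hC₁0.le hxq) hnegα0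
    have hbound2 : ∀ s ∈ Set.Icc (0:ℝ) r, g s * |V (ht s)| * s ^ ((D:ℝ)-2)
        ≤ N * ((1+u) + s) ^ (-b) := by
      intro s hs
      refine (hbound s hs).trans ?_
      have hsu0 : (0:ℝ) < 1 + s + u := by linarith [hs.1]
      have h1 : (s:ℝ) ^ ((D:ℝ)-2) ≤ (1+s+u) ^ ((D:ℝ)-2) :=
        Real.rpow_le_rpow hs.1 (by linarith) (by linarith)
      have h2 : ((1+s+u):ℝ)^(-β) * (1+s+u)^((D:ℝ)-2) = (1+s+u)^(-b) := by
        rw [← Real.rpow_add hsu0, hbdef]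
        congr 1
        ring
      calc C₁ * x^q * (1+u)^(-α) * ((1+s+u)^(-β) * s^((D:ℝ)-2))
          ≤ C₁ * x^q * (1+u)^(-α) * ((1+s+u)^(-β) * (1+s+u)^((D:ℝ)-2)) := by
            apply mul_le_mul_of_nonneg_left
              (mul_le_mul_of_nonneg_left h1 (Real.rpow_nonneg hsu0.le _))
            exact mul_nonneg (mul_nonneg hC₁0.le hxq) hnegα0
        _ = N * ((1+u) + s) ^ (-b) := by
            rw [h2, hNdef, show (1:ℝ)+s+u = (1+u)+s by ring]
    have hIb : IntervalIntegrable (fun s => N * ((1+u) + s) ^ (-b)) volume 0 r :=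
      (aux_shift_integrable (1+u) b r h1u hr.le).const_mul N
    have hmono := intervalIntegral.integral_mono_on hr.le hInt hIb hbound2
    have hval : (∫ s in (0:ℝ)..r, N * ((1+u) + s) ^ (-b)) ≤ N * (1/(b-1)) := by
      rw [intervalIntegral.integral_const_mul]
      apply mul_le_mul_of_nonneg_left _ hN0
      simpa using aux_shift (1+u) b r h1u hb1 hr.le
    have step1 : (1 / r ^ e3) * (∫ s in (0:ℝ)..r, g s * |V (ht s)| * s ^ ((D:ℝ)-2))
        ≤ (1 / r ^ e3) * (N * (1/(b-1))) :=
      mul_le_mul_of_nonneg_left (hmono.trans hval) hrinv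
    refine step1.trans ?_
    have h5 : ((1+r+u):ℝ)^e3 ≤ 2^e3 * r^e3 := by
      rw [← Real.mul_rpow (by norm_num) hr.le]
      exact Real.rpow_le_rpow h1ru.le (by linarith) (by rw [he3def]; linarith)
    have hkeyB : (r^e3)⁻¹ ≤ 2^e3 * (((1+r+u):ℝ)^e3)⁻¹ :=
      inv_le_inv_aux _ _ _ hrpos hPR h5
    have hN1 : (0:ℝ) ≤ N * (1/(b-1)) :=
      mul_nonneg hN0 (div_nonneg zero_le_one hb1'.le)
    calc (1 / r ^ e3) * (N * (1/(b-1)))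
        ≤ (2^e3 * (((1+r+u):ℝ)^e3)⁻¹) * (N * (1/(b-1))) := by
          apply mul_le_mul_of_nonneg_right _ hN1
          rw [one_div]; exact hkeyB
      _ = (C₁ * 2^e3 * (1/(b-1))) * (x^q * ((1+u)^α)⁻¹ * ((1+r+u)^e3)⁻¹) := by
          rw [hNdef, hnegα]; ring
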